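/- For any commutative ring A and any n ≥ 3, the elementary subgroup E_n(A) is a normal subgroup of GL_n(A). -/

import Mathlib

/-- The elementary subgroup `E_n(A) ⊆ GL_n(A)`: the subgroup generated by the
elementary matrices, i.e. the matrices differing from the identity matrix in at most
one nonzero off-diagonal entry. -/
def elementarySubgroup (A : Type*) [CommRing A] (n : ℕ) : Subgroup (GL (Fin n) A) :=
  Subgroup.closure { E : GL (Fin n) A |
    ∃ (i j : Fin n) (c : A), i ≠ j ∧ (E : Matrix (Fin n) (Fin n) A) = Matrix.transvection i j c }

namespace SuslinAux

open Matrix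

variable {A : Type*} [CommRing A] {n : ℕ}

/-- A matrix is "elementary-realizable" if it is the value of some element of the
elementary subgroup. -/
def IsElem (A : Type*) [CommRing A] (n : ℕ) (M : Matrix (Fin n) (Fin n) A) : Prop :=
  ∃ g ∈ elementarySubgroup A n, (g : Matrix (Fin n) (Fin n) A) = M

lemma IsElem.one : IsElem A n 1 :=
  ⟨1, Subgroup.one_mem _, rfl⟩

lemma IsElem.mul {M N : Matrix (Fin n) (Fin n) A} (hM : IsElem A n M) (hN : IsElem A n N) :
    IsElem A n (M * N) := by
  obtain ⟨g, hg, hgv⟩ := hM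
  obtain ⟨h, hh, hhv⟩ := hN
  exact ⟨g * h, Subgroup.mul_mem _ hg hh, by simp [hgv, hhv]⟩

lemma vmv_mul_vmv (a b c d : Fin n → A) :
    vecMulVec a b * vecMulVec c d = (b ⬝ᵥ c) • vecMulVec a d := by
  ext i j
  simp only [mul_apply, vecMulVec_apply, Matrix.smul_apply, dotProduct, smul_eq_mul,
    Finset.sum_mul]
  exact Finset.sum_congr rfl fun k _ => by ring

lemma vmv_add_left (a a' b : Fin n → A) :
    vecMulVec (a + a') b = vecMulVec a b + vecMulVec a' b := by
  ext i j; simp [vecMulVec_apply, add_mul]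

lemma vmv_add_right (a b b' : Fin n → A) :
    vecMulVec a (b + b') = vecMulVec a b + vecMulVec a b' := by
  ext i j; simp [vecMulVec_apply, mul_add]

lemma vmv_zero_left (b : Fin n → A) : vecMulVec (0 : Fin n → A) b = 0 := by
  ext i j; simp [vecMulVec_apply]

lemma vmv_zero_right (a : Fin n → A) : vecMulVec a (0 : Fin n → A) = 0 := by
  ext i j; simp [vecMulVec_apply]

lemma vmv_single_single (i j : Fin n) (a b : A) :
    vecMulVec (Pi.single i a) (Pi.single j b) = Matrix.single i j (a * b) := by
  ext i' j'
  rw [vecMulVec_apply, Pi.single_apply, Pi.single_apply]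
  rcases eq_or_ne i' i with h1 | h1 <;> rcases eq_or_ne j' j with h2 | h2 <;>
    subst_eqs <;> simp_all [Matrix.single] <;> (intros; subst_eqs; simp_all)

/-- The basic generators. -/
lemma isElem_transvection {i j : Fin n} (hij : i ≠ j) (c : A) :
    IsElem A n (Matrix.transvection i j c) := by
  refine ⟨⟨Matrix.transvection i j c, Matrix.transvection i j (-c), ?_, ?_⟩, ?_, rfl⟩
  · rw [transvection_mul_transvection_same _ _ hij]; simp
  · rw [transvection_mul_transvection_same _ _ hij]; simp
  · exact Subgroup.subset_closure ⟨i, j, c, hij, rfl⟩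

lemma isElem_single_vmv {i j : Fin n} (hij : i ≠ j) (a b : A) :
    IsElem A n (1 + vecMulVec (Pi.single i a) (Pi.single j b)) := by
  rw [vmv_single_single]
  exact isElem_transvection hij (a * b)

lemma one_add_mul_one_add (a b c d : Fin n → A) (h : b ⬝ᵥ c = 0) :
    (1 + vecMulVec a b) * (1 + vecMulVec c d)
      = 1 + (vecMulVec a b + vecMulVec c d) := by
  rw [add_mul, mul_add, mul_add, vmv_mul_vmv, h, zero_smul, one_mul, one_mul, mul_one]
  abel

lemma sum_single_eq (w : Fin n → A) : ∑ j, Pi.single j (w j) = w := by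
  funext i
  simp [Finset.sum_apply, Pi.single_apply]

/-- Row-type matrices: `1 + (c·e_m) wᵀ` with `w m = 0`. -/
lemma isElem_row (m : Fin n) (c : A) (w : Fin n → A) (hw : w m = 0) :
    IsElem A n (1 + vecMulVec (Pi.single m c) w) := by
  have H : (∑ j, Pi.single j (w j)) ⬝ᵥ Pi.single m c = 0 ∧
      IsElem A n (1 + vecMulVec (Pi.single m c) (∑ j, Pi.single j (w j))) := by
    refine Finset.sum_induction (fun j => Pi.single j (w j))
      (fun v => v ⬝ᵥ Pi.single m c = 0 ∧ IsElem A n (1 + vecMulVec (Pi.single m c) v))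
      ?_ ?_ ?_
    · rintro v v' ⟨hv, hIv⟩ ⟨hv', hIv'⟩
      refine ⟨by rw [add_dotProduct, hv, hv', add_zero], ?_⟩
      rw [vmv_add_right]
      have := hIv.mul hIv'
      rwa [one_add_mul_one_add _ _ _ _ hv] at this
    · exact ⟨by simp, by rw [vmv_zero_right, add_zero]; exact IsElem.one⟩
    · intro j _
      by_cases hj : j = m
      · subst hj
        refine ⟨by simp [hw], ?_⟩
        simp only [hw, Pi.single_zero, vmv_zero_right, add_zero]
        exact IsElem.one
      · exact ⟨by simp [Pi.single_apply, hj], isElem_single_vmv (Ne.symm hj) c (w j)⟩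
  rw [sum_single_eq] at H
  exact H.2

/-- Column-type matrices: `1 + u (c·e_m)ᵀ` with `u m = 0`. -/
lemma isElem_col (m : Fin n) (c : A) (u : Fin n → A) (hu : u m = 0) :
    IsElem A n (1 + vecMulVec u (Pi.single m c)) := by
  have H : Pi.single m c ⬝ᵥ (∑ j, Pi.single j (u j)) = 0 ∧
      IsElem A n (1 + vecMulVec (∑ j, Pi.single j (u j)) (Pi.single m c)) := by
    refine Finset.sum_induction (fun j => Pi.single j (u j))
      (fun v => Pi.single m c ⬝ᵥ v = 0 ∧ IsElem A n (1 + vecMulVec v (Pi.single m c)))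
      ?_ ?_ ?_
    · rintro v v' ⟨hv, hIv⟩ ⟨hv', hIv'⟩
      refine ⟨by rw [dotProduct_add, hv, hv', add_zero], ?_⟩
      rw [vmv_add_left]
      have := hIv.mul hIv'
      rwa [one_add_mul_one_add _ _ _ _ hv'] at this
    · exact ⟨by simp, by rw [vmv_zero_left, add_zero]; exact IsElem.one⟩
    · intro j _
      by_cases hj : j = m
      · subst hj
        refine ⟨by simp [hu], ?_⟩
        simp only [hu, Pi.single_zero, vmv_zero_left, add_zero]
        exact IsElem.one
      · exact ⟨by simp [single_dotProduct, Pi.single_apply, hj], isElem_single_vmv hj (u j) c⟩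
  rw [sum_single_eq] at H
  exact H.2

/-- Abstract commutator trick. -/
lemma comm_trick {R : Type*} [Ring R] (P Q : R) (hPP : P * P = 0) (hQQ : Q * Q = 0)
    (hQP : Q * P = 0) : (1 + P) * (1 + Q) * ((1 - P) * (1 - Q)) = 1 + P * Q := by
  have h1 : ∀ x : R, P * (P * x) = 0 := fun x => by rw [← mul_assoc, hPP, zero_mul]
  have h2 : ∀ x : R, Q * (Q * x) = 0 := fun x => by rw [← mul_assoc, hQQ, zero_mul]
  have h3 : ∀ x : R, Q * (P * x) = 0 := fun x => by rw [← mul_assoc, hQP, zero_mul]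
  simp only [mul_add, mul_sub, add_mul, sub_mul, one_mul, mul_one, mul_assoc, h1, h2, h3,
    hPP, hQQ, hQP, mul_zero, zero_mul, add_zero, zero_add, sub_zero, zero_sub]
  abel

/-- Suslin's key lemma: if `w ⬝ᵥ u = 0` and some coordinate of `w` vanishes, then
`1 + u wᵀ` is elementary. -/
lemma isElem_of_coord_zero (m : Fin n) (u w : Fin n → A) (hwm : w m = 0)
    (hwu : w ⬝ᵥ u = 0) : IsElem A n (1 + vecMulVec u w) := by
  set u' : Fin n → A := u - Pi.single m (u m) with hu'
  have hu'm : u' m = 0 := by simp [hu']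
  have hwu' : w ⬝ᵥ u' = 0 := by
    rw [hu', dotProduct_sub, hwu, dotProduct_single, hwm, zero_mul, sub_zero]
  set P := vecMulVec u' (Pi.single m (1 : A)) with hP
  set Q := vecMulVec (Pi.single m (1 : A)) w with hQ
  have hPP : P * P = 0 := by
    rw [hP, vmv_mul_vmv, single_dotProduct, hu'm, mul_zero, zero_smul]
  have hQQ : Q * Q = 0 := by
    rw [hQ, vmv_mul_vmv, dotProduct_single, hwm, zero_mul, zero_smul]
  have hQP : Q * P = 0 := by
    rw [hQ, hP, vmv_mul_vmv, hwu', zero_smul]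
  have hPQ : P * Q = vecMulVec u' w := by
    rw [hP, hQ, vmv_mul_vmv, single_dotProduct, Pi.single_eq_same, one_mul, one_smul]
  -- the five elementary factors
  have f1 : IsElem A n (1 + P) := isElem_col m 1 u' hu'm
  have f2 : IsElem A n (1 + Q) := isElem_row m 1 w hwm
  have f3 : IsElem A n (1 - P) := by
    have : (1 : Matrix (Fin n) (Fin n) A) - P
        = 1 + vecMulVec u' (Pi.single m (-1 : A)) := by
      rw [sub_eq_add_neg]
      congr 1
      rw [hP]
      ext i j
      simp [vecMulVec_apply, Pi.single_apply]
      split <;> simp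
    rw [this]
    exact isElem_col m (-1) u' hu'm
  have f4 : IsElem A n (1 - Q) := by
    have : (1 : Matrix (Fin n) (Fin n) A) - Q
        = 1 + vecMulVec (Pi.single m (-1 : A)) w := by
      rw [sub_eq_add_neg]
      congr 1
      rw [hQ]
      ext i j
      simp [vecMulVec_apply, Pi.single_apply]
      split <;> simp
    rw [this]
    exact isElem_row m (-1) w hwm
  have f5 : IsElem A n (1 + vecMulVec (Pi.single m (u m)) w) := isElem_row m (u m) w hwm
  have key : ((1 + P) * (1 + Q) * ((1 - P) * (1 - Q)))
      * (1 + vecMulVec (Pi.single m (u m)) w) = 1 + vecMulVec u w := by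
    rw [comm_trick P Q hPP hQQ hQP, hPQ]
    rw [one_add_mul_one_add _ _ _ _ (by rw [dotProduct_single, hwm, zero_mul])]
    rw [← vmv_add_left]
    have hsum : u' + Pi.single m (u m) = u := by
      funext i; simp [hu']
    rw [hsum]
  rw [← key]
  exact ((f1.mul f2).mul (f3.mul f4)).mul f5

lemma mul_vmv (M : Matrix (Fin n) (Fin n) A) (a b : Fin n → A) :
    M * vecMulVec a b = vecMulVec (M *ᵥ a) b := by
  ext i j
  simp only [mul_apply, vecMulVec_apply, mulVec, dotProduct, Finset.sum_mul]
  exact Finset.sum_congr rfl fun k _ => by ring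

lemma vmv_mul (a b : Fin n → A) (N : Matrix (Fin n) (Fin n) A) :
    vecMulVec a b * N = vecMulVec a (b ᵥ* N) := by
  ext i j
  simp only [mul_apply, vecMulVec_apply, vecMul, dotProduct, Finset.mul_sum]
  exact Finset.sum_congr rfl fun k _ => by ring

lemma isElem_pair (hn : 3 ≤ n) (u : Fin n → A) (k l : Fin n) (hkl : k ≠ l) (c : A) :
    IsElem A n (1 + vecMulVec u
      (c • (u l • (Pi.single k 1 : Fin n → A) - u k • (Pi.single l 1 : Fin n → A)))) := by
  obtain ⟨m, hmk, hml⟩ : ∃ m : Fin n, m ≠ k ∧ m ≠ l := by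
    by_contra h
    push_neg at h
    have hsub : (Finset.univ : Finset (Fin n)) ⊆ {k, l} := by
      intro m _
      by_cases hk : m = k
      · simp [hk]
      · simp [h m hk]
    have hcard := Finset.card_le_card hsub
    have h2 : ({k, l} : Finset (Fin n)).card ≤ 2 := by
      apply le_trans (Finset.card_insert_le _ _)
      simp
    simp only [Finset.card_univ, Fintype.card_fin] at hcard
    omega
  refine isElem_of_coord_zero m u _ ?_ ?_
  · simp [Pi.single_apply, hmk, hml]
  · simp only [smul_dotProduct, sub_dotProduct, single_dotProduct, smul_eq_mul]
    ring

/-- The main lemma: if `u` is unimodular (witnessed by `z`) and `w ⬝ᵥ u = 0`, then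
`1 + u wᵀ` is elementary (for `n ≥ 3`). -/
lemma isElem_main (hn : 3 ≤ n) (u w z : Fin n → A) (hz : z ⬝ᵥ u = 1)
    (hwu : w ⬝ᵥ u = 0) : IsElem A n (1 + vecMulVec u w) := by
  set T : Fin n × Fin n → (Fin n → A) := fun p =>
    (w p.1 * z p.2) • (u p.2 • (Pi.single p.1 1 : Fin n → A)
      - u p.1 • (Pi.single p.2 1 : Fin n → A)) with hT
  have hsum : ∑ p : Fin n × Fin n, T p = w := by
    funext i
    rw [Finset.sum_apply]
    have hterm : ∀ p : Fin n × Fin n, T p i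
        = (w p.1 * z p.2 * u p.2) * (if i = p.1 then 1 else 0)
          - (w p.1 * u p.1) * (z p.2 * (if i = p.2 then 1 else 0)) := by
      intro p
      simp only [hT, Pi.smul_apply, Pi.sub_apply, smul_eq_mul, Pi.single_apply]
      split_ifs <;> ring
    rw [Finset.sum_congr rfl fun p _ => hterm p, Finset.sum_sub_distrib]
    rw [Fintype.sum_prod_type, Fintype.sum_prod_type]
    have e1 : ∀ k : Fin n, ∑ l, w k * z l * u l * (if i = k then 1 else 0)
        = (if i = k then 1 else 0) * (w k * (z ⬝ᵥ u)) := by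
      intro k
      rw [dotProduct, Finset.mul_sum, Finset.mul_sum]
      exact Finset.sum_congr rfl fun l _ => by ring
    have e2 : ∀ k : Fin n, ∑ l, w k * u k * (z l * (if i = l then 1 else 0))
        = w k * u k * z i := by
      intro k
      rw [Finset.sum_eq_single i]
      · simp
      · intro l _ hl
        simp [Ne.symm hl]
      · simp
    rw [Finset.sum_congr rfl fun k _ => e1 k, Finset.sum_congr rfl fun k _ => e2 k]
    rw [Finset.sum_eq_single i]
    · have : ∑ k, w k * u k * z i = (w ⬝ᵥ u) * z i := by
        rw [dotProduct, Finset.sum_mul]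
      rw [this, hwu, hz]
      try simp
    · intro k _ hk
      simp [Ne.symm hk]
    · simp
  have H : (∑ p : Fin n × Fin n, T p) ⬝ᵥ u = 0 ∧
      IsElem A n (1 + vecMulVec u (∑ p : Fin n × Fin n, T p)) := by
    refine Finset.sum_induction T
      (fun v => v ⬝ᵥ u = 0 ∧ IsElem A n (1 + vecMulVec u v)) ?_ ?_ ?_
    · rintro v v' ⟨hv, hIv⟩ ⟨hv', hIv'⟩
      refine ⟨by rw [add_dotProduct, hv, hv', add_zero], ?_⟩
      rw [vmv_add_right]
      have := hIv.mul hIv'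
      rwa [one_add_mul_one_add _ _ _ _ hv] at this
    · exact ⟨by simp, by rw [vmv_zero_right, add_zero]; exact IsElem.one⟩
    · intro p _
      by_cases hp : p.1 = p.2
      · have h0 : T p = 0 := by
          funext i
          simp [hT, hp]
        rw [h0]
        exact ⟨by simp, by rw [vmv_zero_right, add_zero]; exact IsElem.one⟩
      · constructor
        · simp only [hT, smul_dotProduct, sub_dotProduct, smul_eq_mul, single_dotProduct]
          ring
        · exact isElem_pair hn u p.1 p.2 hp (w p.1 * z p.2)
  rw [hsum] at H
  exact H.2

end SuslinAux

open SuslinAux Matrix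

theorem elementarySubgroup_normal (A : Type*) [CommRing A] (n : ℕ) (hn : 3 ≤ n) :
    (elementarySubgroup A n).Normal := by
  constructor
  intro x hx g
  have hx' : x ∈ Subgroup.closure { E : GL (Fin n) A |
      ∃ (i j : Fin n) (c : A), i ≠ j ∧
        (E : Matrix (Fin n) (Fin n) A) = Matrix.transvection i j c } := hx
  refine Subgroup.closure_induction
    (p := fun y _ => g * y * g⁻¹ ∈ elementarySubgroup A n) ?_ ?_ ?_ ?_ hx'
  · rintro s ⟨i, j, c, hij, hs⟩
    have hGG : (g⁻¹).val * g.val = (1 : Matrix (Fin n) (Fin n) A) := by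
      rw [← Units.val_mul, inv_mul_cancel, Units.val_one]
    have hGG' : g.val * (g⁻¹).val = (1 : Matrix (Fin n) (Fin n) A) := by
      rw [← Units.val_mul, mul_inv_cancel, Units.val_one]
    set u : Fin n → A := g.val *ᵥ (Pi.single i 1 : Fin n → A) with hu
    set wv : Fin n → A := (Pi.single j c : Fin n → A) ᵥ* (g⁻¹).val with hwv
    set z : Fin n → A := (Pi.single i 1 : Fin n → A) ᵥ* (g⁻¹).val with hzd
    have hz : z ⬝ᵥ u = 1 := by
      rw [hzd, hu, dotProduct_mulVec, vecMul_vecMul, hGG, vecMul_one, single_dotProduct]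
      simp
    have hwu : wv ⬝ᵥ u = 0 := by
      rw [hwv, hu, dotProduct_mulVec, vecMul_vecMul, hGG, vecMul_one, single_dotProduct]
      simp [Pi.single_apply, Ne.symm hij]
    have hval : ((g * s * g⁻¹ : GL (Fin n) A) : Matrix (Fin n) (Fin n) A)
        = 1 + vecMulVec u wv := by
      rw [Units.val_mul, Units.val_mul, hs, Matrix.transvection]
      have hstd : Matrix.single i j c
          = vecMulVec (Pi.single i (1 : A)) (Pi.single j c) := by
        rw [vmv_single_single, one_mul]
      rw [mul_add, add_mul, mul_one, hGG', hstd, mul_vmv, vmv_mul]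
    obtain ⟨h, hh, hhval⟩ := isElem_main hn u wv z hz hwu
    have heq : g * s * g⁻¹ = h := Units.ext (by rw [hhval, hval])
    rw [heq]
    exact hh
  · show g * 1 * g⁻¹ ∈ elementarySubgroup A n
    have h1 : g * 1 * g⁻¹ = 1 := by group
    rw [h1]
    exact Subgroup.one_mem _
  · intro x y _ _ hpx hpy
    show g * (x * y) * g⁻¹ ∈ elementarySubgroup A n
    have h1 : g * (x * y) * g⁻¹ = (g * x * g⁻¹) * (g * y * g⁻¹) := by group
    rw [h1]
    exact Subgroup.mul_mem _ hpx hpy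
  · intro x _ hpx
    show g * x⁻¹ * g⁻¹ ∈ elementarySubgroup A n
    have h1 : g * x⁻¹ * g⁻¹ = (g * x * g⁻¹)⁻¹ := by group
    rw [h1]
    exact Subgroup.inv_mem _ hpx
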